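/- Let K ⊂ ℝ^d be nonempty compact, r > 0 with d_K(x) = r, and suppose x ∉ conv Σ_K(x). Set η := dist(x, conv Σ_K(x)) > 0 and let v be a unit vector with x + ηv ∈ [x, s] for some s ∈ conv Σ_K(x). Then the open ball int B(x + ηv, η) is disjoint from the closed complement of the r-sublevel set, i.e., int B(x + ηv, η) ⊂ {y : d_K(y) < r}, and consequently for every y with d_K(y) ≥ r one has (y − x)·v ≤ |y − x|²/(2η). -/

import Mathlib

open Metric

/-- The set of nearest points of `K` to `x`. -/
def nearestPoints {d : ℕ} (K : Set (EuclideanSpace ℝ (Fin d)))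
    (x : EuclideanSpace ℝ (Fin d)) : Set (EuclideanSpace ℝ (Fin d)) :=
  {a ∈ K | dist x a = Metric.infDist x K}

/-- In `ℝ^d`, the convex hull of a nonempty compact set is compact (via Carathéodory). -/
lemma aux_isCompact_convexHull {d : ℕ} {s : Set (EuclideanSpace ℝ (Fin d))}
    (hs : IsCompact s) (hsne : s.Nonempty) : IsCompact (convexHull ℝ s) := by
  classical
  obtain ⟨s0, hs0⟩ := hsne
  let f : (Fin (d+1) → ℝ) × (Fin (d+1) → EuclideanSpace ℝ (Fin d)) → EuclideanSpace ℝ (Fin d) := fun p => ∑ i, p.1 i • p.2 i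
  have hf : Continuous f := by
    apply continuous_finset_sum
    intro i _
    exact ((continuous_apply i).comp continuous_fst).smul
      ((continuous_apply i).comp continuous_snd)
  have hT : IsCompact ((stdSimplex ℝ (Fin (d+1))) ×ˢ
      (Set.univ.pi fun _ : Fin (d+1) => s)) :=
    (isCompact_stdSimplex _ _).prod (isCompact_univ_pi fun _ => hs)
  have himg : convexHull ℝ s = f '' ((stdSimplex ℝ (Fin (d+1))) ×ˢ
      (Set.univ.pi fun _ : Fin (d+1) => s)) := by
    apply Set.Subset.antisymm
    · intro x hx
      obtain ⟨ι, hι, z, w, hzs, hai, hw0, hw1, hwz⟩ :=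
        eq_pos_convex_span_of_mem_convexHull hx
      have hcard : Fintype.card ι ≤ d + 1 := by
        have h1 := hai.card_le_finrank_succ
        have h2 : Module.finrank ℝ (vectorSpan ℝ (Set.range z)) ≤ Module.finrank ℝ (EuclideanSpace ℝ (Fin d)) :=
          Submodule.finrank_le _
        have h3 : Module.finrank ℝ (EuclideanSpace ℝ (Fin d)) = d := finrank_euclideanSpace_fin
        omega
      obtain ⟨e⟩ : Nonempty (ι ↪ Fin (d+1)) :=
        Function.Embedding.nonempty_of_card_le (by simpa using hcard)
      let w' : Fin (d+1) → ℝ := fun j => if h : ∃ i, e i = j then w h.choose else 0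
      let z' : Fin (d+1) → EuclideanSpace ℝ (Fin d) := fun j => if h : ∃ i, e i = j then z h.choose else s0
      have hwe : ∀ i, w' (e i) = w i := by
        intro i
        have h : ∃ i', e i' = e i := ⟨i, rfl⟩
        simp only [w', dif_pos h]
        congr 1
        exact e.injective h.choose_spec
      have hze : ∀ i, z' (e i) = z i := by
        intro i
        have h : ∃ i', e i' = e i := ⟨i, rfl⟩
        simp only [z', dif_pos h]
        exact congrArg z (e.injective h.choose_spec)
      have hnotmem : ∀ j : Fin (d+1), j ∉ Finset.univ.map e → ¬ ∃ i, e i = j := by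
        rintro j hj ⟨i, hi⟩
        exact hj (Finset.mem_map.mpr ⟨i, Finset.mem_univ i, hi⟩)
      have hw'sum : ∑ j, w' j = 1 := by
        have h1 : ∑ j ∈ Finset.univ.map e, w' j = ∑ i, w i := by
          rw [Finset.sum_map]; exact Finset.sum_congr rfl fun i _ => hwe i
        have h2 : ∑ j ∈ Finset.univ.map e, w' j = ∑ j, w' j :=
          Finset.sum_subset (Finset.subset_univ _)
            (fun j _ hj => dif_neg (hnotmem j hj))
        rw [← h2, h1, hw1]
      have hz'sum : ∑ j, w' j • z' j = x := by
        have h1 : ∑ j ∈ Finset.univ.map e, w' j • z' j = ∑ i, w i • z i := by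
          rw [Finset.sum_map]; exact Finset.sum_congr rfl fun i _ => by rw [hwe, hze]
        have h2 : ∑ j ∈ Finset.univ.map e, w' j • z' j = ∑ j, w' j • z' j :=
          Finset.sum_subset (Finset.subset_univ _)
            (fun j _ hj => by
              have : w' j = 0 := dif_neg (hnotmem j hj)
              rw [this, zero_smul])
        rw [← h2, h1, hwz]
      refine ⟨(w', z'), ⟨⟨fun j => ?_, hw'sum⟩, fun j _ => ?_⟩, hz'sum⟩
      · by_cases h : ∃ i, e i = j
        · simp only [w', dif_pos h]; exact (hw0 _).le
        · simp only [w', dif_neg h]; exact le_refl 0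
      · by_cases h : ∃ i, e i = j
        · simp only [z', dif_pos h]; exact hzs (Set.mem_range_self _)
        · simp only [z', dif_neg h]; exact hs0
    · rintro x ⟨⟨w, z⟩, ⟨hwmem, hzmem⟩, rfl⟩
      exact Convex.sum_mem (convex_convexHull ℝ s) (fun i _ => hwmem.1 i) hwmem.2
        (fun i _ => subset_convexHull ℝ s (hzmem i (Set.mem_univ i)))
  rw [himg]
  exact hT.image hf

theorem quadratic_estimate_for_reach {d : ℕ}
    (K : Set (EuclideanSpace ℝ (Fin d))) (hne : K.Nonempty) (hK : IsCompact K)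
    (x : EuclideanSpace ℝ (Fin d)) (r : ℝ) (hr : 0 < r)
    (hx : Metric.infDist x K = r)
    (hreg : x ∉ convexHull ℝ (nearestPoints K x))
    (η : ℝ) (hη : η = Metric.infDist x (convexHull ℝ (nearestPoints K x)))
    (v : EuclideanSpace ℝ (Fin d)) (hv : ‖v‖ = 1)
    (s : EuclideanSpace ℝ (Fin d)) (hs : s ∈ convexHull ℝ (nearestPoints K x))
    (hseg : x + η • v ∈ segment ℝ x s) :
    ball (x + η • v) η ⊆ {y | Metric.infDist y K < r} ∧
      ∀ y : EuclideanSpace ℝ (Fin d), r ≤ Metric.infDist y K →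
        (inner ℝ (y - x) v : ℝ) ≤ ‖y - x‖ ^ 2 / (2 * η) := by
  classical
  -- Sigma := nearestPoints K x is compact and nonempty
  have hSigsub : nearestPoints K x ⊆ K := fun a ha => ha.1
  have hSigclosed : IsClosed (nearestPoints K x) := by
    have : nearestPoints K x = K ∩ {a | dist x a = Metric.infDist x K} := rfl
    rw [this]
    exact hK.isClosed.inter
      (isClosed_eq (Continuous.dist continuous_const continuous_id) continuous_const)
  have hSigcpt : IsCompact (nearestPoints K x) := hK.of_isClosed_subset hSigclosed hSigsub
  have hSigne : (nearestPoints K x).Nonempty := by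
    obtain ⟨a0, ha0K, ha0d⟩ := hK.exists_infDist_eq_dist hne x
    exact ⟨a0, ha0K, ha0d.symm⟩
  have hCclosed : IsClosed (convexHull ℝ (nearestPoints K x)) :=
    (aux_isCompact_convexHull hSigcpt hSigne).isClosed
  have hCne : (convexHull ℝ (nearestPoints K x)).Nonempty :=
    hSigne.mono (subset_convexHull ℝ _)
  have hη0 : 0 < η := by
    rw [hη]
    exact (hCclosed.notMem_iff_infDist_pos hCne).mp hreg
  -- the key estimate
  have key : ∀ y : EuclideanSpace ℝ (Fin d), r ≤ Metric.infDist y K →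
      (inner ℝ (y - x) v : ℝ) ≤ ‖y - x‖ ^ 2 / (2 * η) := by
    intro y hy
    -- Step A: for each nearest point a, ⟪y-x, a-x⟫ ≤ ‖y-x‖²/2
    have hA : ∀ a ∈ nearestPoints K x,
        (inner ℝ (y - x) (a - x) : ℝ) ≤ ‖y - x‖ ^ 2 / 2 := by
      intro a ha
      obtain ⟨haK, had⟩ := ha
      have h1 : r ≤ dist y a := le_trans hy (Metric.infDist_le_dist_of_mem haK)
      have h2 : dist x a = r := by rw [had, hx]
      have hexp : ‖y - a‖ ^ 2
          = ‖y - x‖ ^ 2 - 2 * (inner ℝ (y - x) (a - x) : ℝ) + ‖a - x‖ ^ 2 := by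
        have h := @norm_sub_sq_real (EuclideanSpace ℝ (Fin d)) _ _ (y - x) (a - x)
        have e : (y - x) - (a - x) = y - a := by abel
        rw [e] at h
        linarith [h]
      have hna : ‖a - x‖ = r := by rw [← h2, dist_eq_norm, norm_sub_rev]
      have hny : r ≤ ‖y - a‖ := by rwa [← dist_eq_norm]
      have hsq : r ^ 2 ≤ ‖y - a‖ ^ 2 := by nlinarith
      nlinarith [hexp, hna, hsq]
    -- Step B: extends to the convex hull, in particular to s
    have hB : (inner ℝ (y - x) (s - x) : ℝ) ≤ ‖y - x‖ ^ 2 / 2 := by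
      set c : ℝ := ‖y - x‖ ^ 2 / 2 + (inner ℝ (y - x) x : ℝ) with hc
      have hconv : Convex ℝ {p : EuclideanSpace ℝ (Fin d) |
          (inner ℝ (y - x) p : ℝ) ≤ c} := by
        apply convex_halfSpace_le
        exact ⟨fun a b => inner_add_right _ _ _, fun t a => real_inner_smul_right _ _ _⟩
      have hsub : nearestPoints K x ⊆ {p : EuclideanSpace ℝ (Fin d) |
          (inner ℝ (y - x) p : ℝ) ≤ c} := by
        intro a ha
        have h1 := hA a ha
        have h2 : (inner ℝ (y - x) (a - x) : ℝ)
            = (inner ℝ (y - x) a : ℝ) - (inner ℝ (y - x) x : ℝ) := inner_sub_right _ _ _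
        simp only [Set.mem_setOf_eq, hc]
        linarith
      have hmem := convexHull_min hsub hconv hs
      have h2 : (inner ℝ (y - x) (s - x) : ℝ)
          = (inner ℝ (y - x) s : ℝ) - (inner ℝ (y - x) x : ℝ) := inner_sub_right _ _ _
      simp only [Set.mem_setOf_eq, hc] at hmem
      linarith
    -- Step C: relate v to s - x via the segment hypothesis
    obtain ⟨a, b, ha0, hb0, hab, habe⟩ := hseg
    have hb1 : b ≤ 1 := by linarith
    have hηv : η • v = b • (s - x) := by
      have h1 : a = 1 - b := by linarith
      have h2 : (1 - b) • x + b • s = x + η • v := by rw [← h1]; exact habe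
      have h3 : η • v = (1 - b) • x + b • s - x := by rw [h2]; abel
      rw [h3]; module
    have hinner : η * (inner ℝ (y - x) v : ℝ) = b * (inner ℝ (y - x) (s - x) : ℝ) := by
      rw [← real_inner_smul_right, ← real_inner_smul_right, hηv]
    have hbw : b * (inner ℝ (y - x) (s - x) : ℝ) ≤ ‖y - x‖ ^ 2 / 2 := by
      rcases le_or_gt (inner ℝ (y - x) (s - x) : ℝ) 0 with h | h
      · have : b * (inner ℝ (y - x) (s - x) : ℝ) ≤ 0 := mul_nonpos_of_nonneg_of_nonpos hb0 h
        nlinarith [sq_nonneg ‖y - x‖]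
      · nlinarith
    rw [le_div_iff₀ (by positivity)]
    nlinarith
  refine ⟨?_, key⟩
  intro y hy
  simp only [Set.mem_setOf_eq]
  by_contra hcon
  push_neg at hcon
  have h2 := key y hcon
  have h3 : (inner ℝ (y - x) v : ℝ) * (2 * η) ≤ ‖y - x‖ ^ 2 :=
    (le_div_iff₀ (by positivity)).mp h2
  have hd : dist y (x + η • v) < η := Metric.mem_ball.mp hy
  have hnorm : ‖y - (x + η • v)‖ ^ 2
      = ‖y - x‖ ^ 2 - 2 * (η * (inner ℝ (y - x) v : ℝ)) + η ^ 2 := by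
    have e : y - (x + η • v) = (y - x) - η • v := by abel
    rw [e, @norm_sub_sq_real (EuclideanSpace ℝ (Fin d)) _ _,
      real_inner_smul_right, norm_smul, Real.norm_eq_abs, abs_of_pos hη0, mul_pow, hv]
    ring
  have hdist : dist y (x + η • v) = ‖y - (x + η • v)‖ := dist_eq_norm _ _
  nlinarith [dist_nonneg (x := y) (y := x + η • v)]
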